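/- Let P be a nonempty compact convex subset of ℝⁿ, f, g : ℝⁿ → ℝ convex and differentiable, F = f + g, x ∈ P, and let s be a minimizer over P of the map u ↦ ⟨∇f(x), u − x⟩ + g(u) − g(x). Then ⟨∇F(x), s − x⟩ ≤ 0, i.e., the direction Δx = s − x is a descent direction for F at x. -/

import Mathlib

open RealInnerProductSpace

lemma aux_inner_grad {n : ℕ} (h : EuclideanSpace ℝ (Fin n) → ℝ)
    (x v : EuclideanSpace ℝ (Fin n)) :
    ⟪gradient h x, v⟫ = fderiv ℝ h x v := by
  rw [gradient, InnerProductSpace.toDual_symm_apply]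

lemma aux_grad_ineq {n : ℕ} (h : EuclideanSpace ℝ (Fin n) → ℝ)
    (hconv : ConvexOn ℝ Set.univ h) (hdiff : Differentiable ℝ h)
    (x y : EuclideanSpace ℝ (Fin n)) :
    fderiv ℝ h x (y - x) ≤ h y - h x := by
  set L : ℝ → EuclideanSpace ℝ (Fin n) := fun t => x + t • (y - x) with hL
  have hLd : ∀ t : ℝ, HasDerivAt L (y - x) t := by
    intro t
    simpa [hL] using ((hasDerivAt_id t).smul_const (y - x)).const_add x
  have hφconv : ConvexOn ℝ Set.univ (h ∘ L) := by
    have : ConvexOn ℝ Set.univ (h ∘ (AffineMap.lineMap x y : ℝ →ᵃ[ℝ] _)) := by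
      apply hconv.comp_affineMap
    have hfun : h ∘ L = h ∘ (AffineMap.lineMap x y : ℝ →ᵃ[ℝ] _) := by
      funext t
      show h (x + t • (y - x)) = h (AffineMap.lineMap x y t)
      rw [AffineMap.lineMap_apply_module]
      congr 1
      module
    rw [hfun]
    exact this
  have hφd : HasDerivAt (h ∘ L) (fderiv ℝ h x (y - x)) 0 := by
    have := (hdiff (L 0)).hasFDerivAt.comp_hasDerivAt 0 (hLd 0)
    simpa [hL] using this
  have := hφconv.le_slope_of_hasDerivAt (Set.mem_univ 0) (Set.mem_univ 1)
    one_pos hφd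
  rw [slope_def_field] at this
  simpa [hL] using this

/-- if `s` minimizes the partially linearized function at `x ∈ P` over `P`,
then `Δx = s - x` is a descent direction for `F = f + g` at `x`: `⟪∇F x, s - x⟫ ≤ 0`. -/
theorem stmt_4 (n : ℕ) (P : Set (EuclideanSpace ℝ (Fin n)))
    (hPne : P.Nonempty) (hPcpt : IsCompact P) (hPconv : Convex ℝ P)
    (f g : EuclideanSpace ℝ (Fin n) → ℝ)
    (hfconv : ConvexOn ℝ Set.univ f) (hgconv : ConvexOn ℝ Set.univ g)
    (hfdiff : Differentiable ℝ f) (hgdiff : Differentiable ℝ g)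
    (x : EuclideanSpace ℝ (Fin n)) (hx : x ∈ P)
    (s : EuclideanSpace ℝ (Fin n)) (hs : s ∈ P)
    (hmin : IsMinOn (fun u => ⟪gradient f x, u - x⟫ + g u - g x) P s) :
    ⟪gradient (fun y => f y + g y) x, s - x⟫ ≤ 0 := by
  have h1 : ⟪gradient f x, s - x⟫ + g s - g x ≤ 0 := by
    have := hmin hx
    simpa using this
  have h2 : fderiv ℝ g x (s - x) ≤ g s - g x := aux_grad_ineq g hgconv hgdiff x s
  have hsum : fderiv ℝ (fun y => f y + g y) x (s - x)
      = fderiv ℝ f x (s - x) + fderiv ℝ g x (s - x) := by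
    rw [fderiv_fun_add (hfdiff x) (hgdiff x)]; rfl
  rw [aux_inner_grad] at h1 ⊢
  rw [hsum]
  linarith
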